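/- arXiv:2306.14474 — 2 statements merged into one kernel-verified Lean document; each statement's English description precedes it below -/
import Mathlib

section
/- Let p ≥ 3 be an odd integer. In the ring R = ℤ[X]/((X^p − 1)·ℤ[X]), let σ denote the image of X, set λ = 1 − σ, let ε : R → ℤ be the ring homomorphism induced by X ↦ 1, and let I = ker ε. Then the ideal I², i.e., the square of the ideal I, equals the ℤ-submodule of R spanned by {p·λ, λ², λ³, …, λ^{p−1}}; in fact I² = p·ℤ·λ ⊕ ⊕_{k=2}^{p−1} ℤ·λ^k as an internal direct sum of abelian groups. -/
set_option maxHeartbeats 1000000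


open Polynomial

private lemma aux_key {R : Type*} [CommRing R] (p : ℕ) (x : R) (hx : x ^ p = 1) :
    (p : R) * (1 - x) = (1 - x) ^ 2 * (∑ i ∈ Finset.range p, ∑ j ∈ Finset.range i, x ^ j) := by
  have h0 : (∑ i ∈ Finset.range p, x ^ i) * (x - 1) = 0 := by
    rw [geom_sum_mul, hx, sub_self]
  have h2 : (∑ i ∈ Finset.range p, x ^ i)
      = (p : R) + (∑ i ∈ Finset.range p, ∑ j ∈ Finset.range i, x ^ j) * (x - 1) := by
    rw [Finset.sum_mul]
    have h3 : ∀ i ∈ Finset.range p, x ^ i = 1 + (∑ j ∈ Finset.range i, x ^ j) * (x - 1) := by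
      intro i _
      rw [geom_sum_mul]; ring
    rw [Finset.sum_congr rfl h3, Finset.sum_add_distrib, Finset.sum_const, Finset.card_range,
      nsmul_eq_mul, mul_one]
  linear_combination (x - 1) * h2 - h0

private lemma aux_pow {R : Type*} [CommRing R] (p : ℕ) (hp : 3 ≤ p) (hodd : Odd p) (x : R)
    (hx : x ^ p = 1) :
    (1 - x) ^ p = ∑ m ∈ Finset.Ico 1 p,
      ((-1) ^ (m + p) * (p.choose m) : ℤ) • (1 - x) ^ (p - m) := by
  have h1 : (1 : R) = (1 - (1 - x)) ^ p := by simp [hx]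
  rw [sub_pow] at h1
  rw [Finset.range_eq_Ico, Finset.sum_eq_sum_Ico_succ_bot (by omega : 0 < p + 1),
    Finset.sum_Ico_succ_top (by omega : 1 ≤ p)] at h1
  simp only [pow_zero, one_pow, Nat.sub_zero, Nat.choose_self, Nat.choose_zero_right,
    Nat.sub_self, Nat.cast_one, mul_one, one_mul] at h1
  have hneg : ((-1 : R)) ^ (0 + p) = -1 := by
    simpa using hodd.neg_one_pow
  have hneg2 : ((-1 : R)) ^ (p + p) = 1 := by
    rw [← two_mul]; exact Even.neg_one_pow ⟨p, (two_mul p).symm ▸ rfl⟩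
  rw [hneg, hneg2] at h1
  have h2 : (1 - x) ^ p
      = ∑ m ∈ Finset.Ico 1 p, (-1 : R) ^ (m + p) * (1 - x) ^ (p - m) * (p.choose m) := by
    linear_combination h1
  rw [h2]
  refine Finset.sum_congr rfl fun m _ => ?_
  push_cast [zsmul_eq_mul]
  ring

/-- In `R = ℤ[X]/(X^p − 1)` with `σ` the image of `X`, `λ = 1 − σ`, and `I` the kernel of
the augmentation map `ε` (induced by `X ↦ 1`), the ideal `I²`, as a `ℤ`-submodule of `R`,
is the internal direct sum `p·ℤ·λ ⊕ ⊕_{k=2}^{p−1} ℤ·λ^k`. -/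
theorem stmt_9 (p : ℕ) (hp : 3 ≤ p) (hodd : Odd p)
    (ε : (ℤ[X] ⧸ Ideal.span {(X : ℤ[X]) ^ p - 1}) →+* ℤ)
    (hε : ε (Ideal.Quotient.mk (Ideal.span {(X : ℤ[X]) ^ p - 1}) X) = 1) :
    (Submodule.restrictScalars ℤ (RingHom.ker ε ^ 2) =
      ⨆ k : Fin (p - 1),
        Submodule.span ℤ
          {if (k : ℕ) = 0 then
              (p : ℤ) • (1 - Ideal.Quotient.mk (Ideal.span {(X : ℤ[X]) ^ p - 1}) X)
            else (1 - Ideal.Quotient.mk (Ideal.span {(X : ℤ[X]) ^ p - 1}) X) ^ ((k : ℕ) + 1)}) ∧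
    iSupIndep (fun k : Fin (p - 1) =>
      Submodule.span ℤ
        {if (k : ℕ) = 0 then
            (p : ℤ) • (1 - Ideal.Quotient.mk (Ideal.span {(X : ℤ[X]) ^ p - 1}) X)
          else (1 - Ideal.Quotient.mk (Ideal.span {(X : ℤ[X]) ^ p - 1}) X) ^ ((k : ℕ) + 1)}) := by
  set σ : ℤ[X] ⧸ Ideal.span {(X : ℤ[X]) ^ p - 1} :=
    Ideal.Quotient.mk (Ideal.span {(X : ℤ[X]) ^ p - 1}) X with hσ
  set l : ℤ[X] ⧸ Ideal.span {(X : ℤ[X]) ^ p - 1} := 1 - σ with hl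
  set v : Fin (p - 1) → ℤ[X] ⧸ Ideal.span {(X : ℤ[X]) ^ p - 1} :=
    fun k => if (k : ℕ) = 0 then (p : ℤ) • l else l ^ ((k : ℕ) + 1) with hv
  have hvs : ∀ k : Fin (p - 1),
      (if (k : ℕ) = 0 then (p : ℤ) • l else l ^ ((k : ℕ) + 1)) = v k := fun k => by rw [hv]
  -- σ^p = 1
  have hσp : σ ^ p = 1 := by
    have h0 : Ideal.Quotient.mk (Ideal.span {(X : ℤ[X]) ^ p - 1}) ((X : ℤ[X]) ^ p - 1) = 0 := by
      rw [Ideal.Quotient.eq_zero_iff_mem]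
      exact Ideal.subset_span rfl
    rw [map_sub, map_pow, map_one, sub_eq_zero, ← hσ] at h0
    exact h0
  have hsl : σ = 1 - l := by rw [hl]; ring
  -- the augmentation map is evaluation at 1
  have hεf : ∀ f : ℤ[X],
      ε (Ideal.Quotient.mk (Ideal.span {(X : ℤ[X]) ^ p - 1}) f) = f.eval 1 := by
    intro f
    have hcomp : ε.comp (Ideal.Quotient.mk (Ideal.span {(X : ℤ[X]) ^ p - 1}))
        = evalRingHom 1 := by
      apply Polynomial.ringHom_ext
      · intro a
        simp [Polynomial.C_eq_intCast, map_intCast]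
      · simpa [← hσ] using hε
    have := RingHom.congr_fun hcomp f
    simpa using this
  -- kernel of ε
  have hker : RingHom.ker ε = Ideal.span {l} := by
    ext x
    constructor
    · intro hx
      obtain ⟨f, rfl⟩ := Ideal.Quotient.mk_surjective x
      rw [RingHom.mem_ker, hεf] at hx
      have hdvd : (X - C 1) ∣ f := Polynomial.dvd_iff_isRoot.mpr hx
      obtain ⟨q, hq⟩ := hdvd
      rw [Ideal.mem_span_singleton]
      refine ⟨-(Ideal.Quotient.mk (Ideal.span {(X : ℤ[X]) ^ p - 1}) q), ?_⟩
      rw [hq, map_mul, map_sub, Polynomial.C_1, map_one, ← hσ, hl]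
      ring
    · intro hx
      have hle : Ideal.span {l} ≤ RingHom.ker ε := by
        rw [Ideal.span_le, Set.singleton_subset_iff, SetLike.mem_coe, RingHom.mem_ker, hl,
          map_sub, map_one, hε, sub_self]
      exact hle hx
  have hI2 : RingHom.ker ε ^ 2 = Ideal.span {l ^ 2} := by
    rw [hker, Ideal.span_singleton_pow]
  -- the span N
  set N : Submodule ℤ (ℤ[X] ⧸ Ideal.span {(X : ℤ[X]) ^ p - 1}) :=
    Submodule.span ℤ (Set.range v) with hN
  have hNsup : N = ⨆ k : Fin (p - 1), Submodule.span ℤ {v k} := Submodule.span_range_eq_iSup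
  have hvmem : ∀ k, v k ∈ N := fun k => Submodule.subset_span ⟨k, rfl⟩
  have hgen : ∀ (j : ℕ) (h : j < p - 1),
      (if j = 0 then (p : ℤ) • l else l ^ (j + 1)) ∈ N := fun j h => hvmem ⟨j, h⟩
  have hpl : (p : ℤ) • l ∈ N := by simpa using hgen 0 (by omega)
  have hlj : ∀ j : ℕ, 2 ≤ j → j ≤ p - 1 → l ^ j ∈ N := by
    intro j hj2 hjp
    have := hgen (j - 1) (by omega)
    rw [if_neg (by omega : ¬(j - 1 = 0)), (by omega : j - 1 + 1 = j)] at this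
    exact this
  have hl2 : l ^ 2 ∈ N := hlj 2 le_rfl (by omega)
  -- l^p ∈ N
  have hlp : l ^ p ∈ N := by
    have hexp := aux_pow p hp hodd σ hσp
    rw [← hl] at hexp
    rw [hexp]
    refine Submodule.sum_mem _ fun m hm => ?_
    rw [Finset.mem_Ico] at hm
    rcases Nat.lt_or_ge (p - m) 2 with h1 | h2
    · -- p - m = 1, i.e. m = p - 1
      have hm1 : m = p - 1 := by omega
      have hpm : p - m = 1 := by omega
      have hch : (p.choose m : ℤ) = p := by
        have h1 : p.choose m = p := by
          rw [hm1, (by omega : p - 1 = p - 1)]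
          rw [show p - 1 = p - 1 from rfl]
          have := Nat.choose_symm (by omega : 1 ≤ p)
          rw [this, Nat.choose_one_right]
        rw [h1]
      have hsign : ((-1 : ℤ)) ^ (m + p) = -1 := by
        have hoddmp : Odd (m + p) := by
          rcases hodd with ⟨t, ht⟩
          exact ⟨2 * t, by omega⟩
        exact hoddmp.neg_one_pow
      have hc : ((-1 : ℤ) ^ (m + p) * (p.choose m) : ℤ) = -(p : ℤ) := by
        rw [hsign, hch]; ring
      rw [hpm, pow_one, hc]
      have hsm : (-(p : ℤ)) • l = (-1 : ℤ) • ((p : ℤ) • l) := by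
        rw [smul_smul]; norm_num
      rw [hsm]
      exact Submodule.smul_mem _ _ hpl
    · exact Submodule.smul_mem _ _ (hlj _ h2 (by omega))
  -- N is stable under multiplication by σ
  have hσmul : ∀ x ∈ N, σ * x ∈ N := by
    have hmap : Submodule.map (LinearMap.mulLeft ℤ σ) N ≤ N := by
      rw [hN, Submodule.map_span, Submodule.span_le]
      rintro _ ⟨_, ⟨k, rfl⟩, rfl⟩
      simp only [LinearMap.mulLeft_apply, SetLike.mem_coe]
      by_cases hk : (k : ℕ) = 0
      · simp only [hv]
        simp only [hk, if_pos]
        have hid : σ * ((p : ℤ) • l) = (p : ℤ) • l + (-(p : ℤ)) • l ^ 2 := by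
          rw [hsl]
          simp only [zsmul_eq_mul]
          push_cast
          ring
        rw [hid]
        exact add_mem hpl (Submodule.smul_mem _ _ hl2)
      · simp only [hv]
        simp only [hk, if_neg, if_false]
        have hid : σ * l ^ ((k : ℕ) + 1) = l ^ ((k : ℕ) + 1) - l ^ ((k : ℕ) + 2) := by
          rw [hsl]; ring
        rw [hid]
        have hkb := k.isLt
        have hk1 : l ^ ((k : ℕ) + 1) ∈ N := hlj _ (by omega) (by omega)
        have hk2 : l ^ ((k : ℕ) + 2) ∈ N := by
          by_cases h : (k : ℕ) + 2 = p
          · rw [h]; exact hlp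
          · exact hlj _ (by omega) (by omega)
        exact sub_mem hk1 hk2
    intro x hx
    exact hmap ⟨x, hx, rfl⟩
  have hmono : ∀ n : ℕ, σ ^ n * l ^ 2 ∈ N := by
    intro n
    induction n with
    | zero => simpa using hl2
    | succ n ih =>
      have h : σ ^ (n + 1) * l ^ 2 = σ * (σ ^ n * l ^ 2) := by ring
      rw [h]; exact hσmul _ ih
  have hfwd : ∀ f : ℤ[X],
      (Ideal.Quotient.mk (Ideal.span {(X : ℤ[X]) ^ p - 1}) f) * l ^ 2 ∈ N := by
    intro f
    induction f using Polynomial.induction_on' with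
    | add f g hf hg => rw [map_add, add_mul]; exact add_mem hf hg
    | monomial n a =>
      rw [← Polynomial.smul_X_eq_monomial, map_zsmul, map_pow, ← hσ, smul_mul_assoc]
      exact Submodule.smul_mem _ _ (hmono n)
  -- the equality
  have heq : Submodule.restrictScalars ℤ (RingHom.ker ε ^ 2) = N := by
    rw [hI2]
    apply le_antisymm
    · intro x hx
      rw [Submodule.restrictScalars_mem] at hx
      obtain ⟨r, hr⟩ := Ideal.mem_span_singleton'.mp hx
      obtain ⟨f, rfl⟩ := Ideal.Quotient.mk_surjective r
      rw [← hr]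
      exact hfwd f
    · rw [hN, Submodule.span_le]
      rintro _ ⟨k, rfl⟩
      rw [SetLike.mem_coe, Submodule.restrictScalars_mem, Ideal.mem_span_singleton]
      by_cases hk : (k : ℕ) = 0
      · simp only [hv]
        simp only [hk, if_pos]
        refine ⟨∑ i ∈ Finset.range p, ∑ j ∈ Finset.range i, σ ^ j, ?_⟩
        have hkey := aux_key p σ hσp
        rw [← hl] at hkey
        rw [zsmul_eq_mul, Int.cast_natCast]
        exact hkey
      · simp only [hv]
        simp only [hk, if_neg, if_false]
        exact pow_dvd_pow l (by omega)
  -- linear independence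
  have hfree : LinearIndependent ℤ v := by
    rw [Fintype.linearIndependent_iff]
    intro g hg
    set a : Fin (p - 1) → ℤ := fun k => if (k : ℕ) = 0 then g k * p else g k with ha
    set F : ℤ[X] := ∑ k : Fin (p - 1), a k • ((1 : ℤ[X]) - X) ^ ((k : ℕ) + 1) with hF
    have hmkF : Ideal.Quotient.mk (Ideal.span {(X : ℤ[X]) ^ p - 1}) F = 0 := by
      rw [hF, map_sum, ← hg]
      refine Finset.sum_congr rfl fun k _ => ?_
      rw [map_zsmul, map_pow, map_sub, map_one, ← hσ, ← hl, hv, ha]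
      by_cases hk : (k : ℕ) = 0
      · simp only [hk, if_pos, pow_one, zero_add]
        rw [mul_smul]
      · simp only [hk, if_neg, if_false]
    have hFdvd : ((X : ℤ[X]) ^ p - 1) ∣ F := by
      rw [← Ideal.mem_span_singleton, ← Ideal.Quotient.eq_zero_iff_mem]
      exact hmkF
    have hFdeg : F.natDegree ≤ p - 1 := by
      rw [hF]
      refine Polynomial.natDegree_sum_le_of_forall_le _ _ fun k _ => ?_
      refine le_trans (Polynomial.natDegree_smul_le _ _) ?_
      refine le_trans (Polynomial.natDegree_pow_le) ?_
      have h1 : ((1 : ℤ[X]) - X).natDegree ≤ 1 := by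
        refine le_trans (Polynomial.natDegree_sub_le _ _) ?_
        simp
      have hkb := k.isLt
      calc ((k : ℕ) + 1) * ((1 : ℤ[X]) - X).natDegree ≤ ((k : ℕ) + 1) * 1 :=
            Nat.mul_le_mul_left _ h1
        _ ≤ p - 1 := by omega
    have hF0 : F = 0 := by
      by_contra hF0
      have hled := Polynomial.natDegree_le_of_dvd hFdvd hF0
      have hdX : ((X : ℤ[X]) ^ p - 1).natDegree = p := by
        have := Polynomial.natDegree_X_pow_sub_C (n := p) (r := (1 : ℤ))
        simpa using this
      omega
    have hG : (0 : ℤ[X]) = ∑ k : Fin (p - 1), a k • (X : ℤ[X]) ^ ((k : ℕ) + 1) := by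
      have hcmp := congrArg (fun q : ℤ[X] => q.comp (1 - X)) hF0
      simp only [hF, Polynomial.zero_comp] at hcmp
      rw [Polynomial.sum_comp] at hcmp
      rw [← hcmp]
      refine Finset.sum_congr rfl fun k _ => ?_
      rw [Polynomial.smul_comp, Polynomial.pow_comp, Polynomial.sub_comp, Polynomial.one_comp,
        Polynomial.X_comp, sub_sub_cancel]
    have hacoeff : ∀ j : Fin (p - 1), a j = 0 := by
      intro j
      have hco := congrArg (fun q : ℤ[X] => q.coeff ((j : ℕ) + 1)) hG
      simp only [Polynomial.coeff_zero, Polynomial.finset_sum_coeff, Polynomial.coeff_smul,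
        Polynomial.coeff_X_pow, smul_eq_mul] at hco
      rw [Finset.sum_eq_single j] at hco
      · simpa using hco.symm
      · intro k _ hkj
        rw [if_neg, mul_zero]
        intro hc
        exact hkj (Fin.ext (by omega))
      · intro h
        exact absurd (Finset.mem_univ j) h
    intro i
    have hai := hacoeff i
    rw [ha] at hai
    by_cases hi : (i : ℕ) = 0
    · simp only [hi, if_pos] at hai
      have hp0 : (p : ℤ) ≠ 0 := Int.natCast_ne_zero.mpr (by omega)
      exact (mul_eq_zero.mp hai).resolve_right hp0
    · simpa [hi] using hai
  constructor
  · simp only [hvs]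
    rw [heq, hNsup]
  · simp only [hvs]
    exact hfree.iSupIndep_span_singleton
end

section
/- Let p ≥ 3 be an odd integer. In the ring R = ℤ[X]/((X^p − 1)·ℤ[X]), let ε : R → ℤ be the ring homomorphism induced by X ↦ 1, and let I = ker ε. Then for every integer m ≥ 1, the quotient ℤ-module I^m / I^{m+1} is isomorphic to ℤ/pℤ. -/
open Polynomial

set_option maxHeartbeats 2000000

/-- In `R = ℤ[X]/(X^p − 1)` with `I` the kernel of the augmentation map `ε`
(induced by `X ↦ 1`), one has `I^m / I^{m+1} ≅ ℤ/pℤ` as `ℤ`-modules for every `m ≥ 1`. -/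
theorem stmt_10 (p : ℕ) (hp : 3 ≤ p) (hodd : Odd p)
    (ε : (ℤ[X] ⧸ Ideal.span {(X : ℤ[X]) ^ p - 1}) →+* ℤ)
    (hε : ε (Ideal.Quotient.mk (Ideal.span {(X : ℤ[X]) ^ p - 1}) X) = 1)
    (m : ℕ) (hm : 1 ≤ m) :
    Nonempty
      ((↥(Submodule.restrictScalars ℤ (RingHom.ker ε ^ m)) ⧸
          Submodule.comap (Submodule.restrictScalars ℤ (RingHom.ker ε ^ m)).subtype
            (Submodule.restrictScalars ℤ (RingHom.ker ε ^ (m + 1)))) ≃ₗ[ℤ] ZMod p) := by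
  classical
  set mkq := Ideal.Quotient.mk (Ideal.span {(X : ℤ[X]) ^ p - 1}) with hmkq
  -- ε ∘ mkq = evaluation at 1
  have hcomp : ∀ a : ℤ[X], ε (mkq a) = a.eval 1 := by
    have key : ε.comp mkq = evalRingHom (1 : ℤ) := by
      apply Polynomial.ringHom_ext
      · intro a
        simp [RingHom.comp_apply, Polynomial.C_eq_intCast, map_intCast]
      · simpa [RingHom.comp_apply] using hε
    intro a
    simpa using RingHom.congr_fun key a
  set y : ℤ[X] ⧸ Ideal.span {(X : ℤ[X]) ^ p - 1} := mkq (X - C 1) with hy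
  -- the kernel of ε is the principal ideal generated by y
  have hK : RingHom.ker ε = Ideal.span {y} := by
    apply le_antisymm
    · intro z hz
      obtain ⟨a, rfl⟩ := Ideal.Quotient.mk_surjective z
      rw [RingHom.mem_ker, hcomp] at hz
      obtain ⟨b, hb⟩ := Polynomial.dvd_iff_isRoot.2 hz
      rw [Ideal.mem_span_singleton]
      exact ⟨mkq b, by rw [← map_mul, ← hb]⟩
    · rw [Ideal.span_le, Set.singleton_subset_iff]
      have : ε y = 0 := by rw [hy, hcomp]; simp
      simpa [RingHom.mem_ker] using this
  have hKpow : ∀ n : ℕ, RingHom.ker ε ^ n = Ideal.span {y ^ n} := by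
    intro n; rw [hK, Ideal.span_singleton_pow]
  -- the cyclotomic-like factor
  set f : ℤ[X] := ∑ i ∈ Finset.range p, X ^ i with hf
  have hqf : (X : ℤ[X]) ^ p - 1 = (X - C 1) * f := by
    rw [C_1, ← geom_sum_mul]; ring
  have hf1 : f.eval 1 = (p : ℤ) := by simp [hf]
  obtain ⟨g, hg⟩ : (X - C 1 : ℤ[X]) ∣ (f - C (p : ℤ)) :=
    Polynomial.dvd_iff_isRoot.2 (by simp [Polynomial.IsRoot, hf1])
  have hq0 : mkq ((X : ℤ[X]) ^ p - 1) = 0 :=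
    Ideal.Quotient.eq_zero_iff_mem.2 (Ideal.mem_span_singleton_self _)
  have hCk : ∀ k : ℤ, mkq (C k) = (k : ℤ[X] ⧸ Ideal.span {(X : ℤ[X]) ^ p - 1}) := by
    intro k
    rw [eq_intCast (Polynomial.C : ℤ →+* ℤ[X]) k, map_intCast]
  -- p * y^m ∈ span {y^(m+1)}
  have hpmem : ((p : ℤ) : ℤ[X] ⧸ Ideal.span {(X : ℤ[X]) ^ p - 1}) * y ^ m
      ∈ Ideal.span {y ^ (m + 1)} := by
    have hfsplit : (C (p : ℤ) : ℤ[X]) = f - (X - C 1) * g := by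
      rw [← hg]; ring
    have hXm : (X - C 1 : ℤ[X]) * (X - C 1) ^ (m - 1) = (X - C 1) ^ m := by
      rw [← pow_succ']; congr 1; omega
    have hmain : (C (p : ℤ)) * (X - C 1) ^ m
        = ((X : ℤ[X]) ^ p - 1) * (X - C 1) ^ (m - 1) - (X - C 1) ^ (m + 1) * g := by
      rw [hfsplit, hqf,
        show (X - C 1 : ℤ[X]) * f * (X - C 1) ^ (m - 1)
          = f * ((X - C 1) * (X - C 1) ^ (m - 1)) by ring, hXm]
      ring
    rw [Ideal.mem_span_singleton]
    refine ⟨-(mkq g), ?_⟩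
    rw [show ((p : ℤ) : ℤ[X] ⧸ Ideal.span {(X : ℤ[X]) ^ p - 1}) * y ^ m
        = mkq ((C (p : ℤ)) * (X - C 1) ^ m) by rw [map_mul, map_pow, hCk, hy],
      hmain, map_sub, map_mul, map_mul, map_pow, map_pow, hq0]
    rw [hy]
    ring
  -- converse: if k * y^m ∈ span {y^(m+1)} then p ∣ k
  have hXC : Prime (X - C (1 : ℤ)) := Polynomial.prime_X_sub_C 1
  have hXne : (X - C 1 : ℤ[X]) ≠ 0 := hXC.ne_zero
  have hker : ∀ k : ℤ,
      ((k : ℤ[X] ⧸ Ideal.span {(X : ℤ[X]) ^ p - 1}) * y ^ m ∈ Ideal.span {y ^ (m + 1)}) →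
      (p : ℤ) ∣ k := by
    intro k hk
    rw [Ideal.mem_span_singleton] at hk
    obtain ⟨c, hc⟩ := hk
    obtain ⟨s, rfl⟩ := Ideal.Quotient.mk_surjective c
    have hzero : mkq (C k * (X - C 1) ^ m - (X - C 1) ^ (m + 1) * s) = 0 := by
      rw [map_sub, map_mul, map_mul, map_pow, map_pow, hCk, ← hy, hc]
      ring
    rw [Ideal.Quotient.eq_zero_iff_mem, Ideal.mem_span_singleton] at hzero
    obtain ⟨t, ht⟩ := hzero
    have hdvd1 : (X - C 1 : ℤ[X]) ^ m ∣ (X - C 1) * (f * t) := by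
      have h2 : (X - C 1 : ℤ[X]) * (f * t) = ((X : ℤ[X]) ^ p - 1) * t := by
        rw [hqf]; ring
      rw [h2, ← ht]
      exact dvd_sub ⟨C k, by ring⟩ ⟨(X - C 1) * s, by ring⟩
    have hdvd2 : (X - C 1 : ℤ[X]) ^ (m - 1) ∣ f * t := by
      have h1 : (X - C 1 : ℤ[X]) * (X - C 1) ^ (m - 1) ∣ (X - C 1) * (f * t) := by
        rw [← pow_succ', show m - 1 + 1 = m by omega]
        exact hdvd1
      exact (mul_dvd_mul_iff_left hXne).1 h1
    have hnotdvd : ¬ (X - C 1 : ℤ[X]) ∣ f := by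
      intro h
      obtain ⟨w, hw⟩ := h
      have h3 := congrArg (Polynomial.eval 1) hw
      simp [hf1] at h3
      omega
    have hdvdt : (X - C 1 : ℤ[X]) ^ (m - 1) ∣ t :=
      (hXC.pow_dvd_of_dvd_mul_left _ hnotdvd) hdvd2
    obtain ⟨u, hu⟩ := hdvdt
    have heq : (X - C 1 : ℤ[X]) ^ m * C k = (X - C 1) ^ m * ((X - C 1) * s + f * u) := by
      have hqt : ((X : ℤ[X]) ^ p - 1) * t = (X - C 1) ^ m * (f * u) := by
        rw [hqf, hu,
          show (X - C 1 : ℤ[X]) * f * ((X - C 1) ^ (m - 1) * u)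
            = ((X - C 1) * (X - C 1) ^ (m - 1)) * (f * u) by ring, ← pow_succ',
          show m - 1 + 1 = m by omega]
      rw [hqt] at ht
      linear_combination ht
    have hcancel : (C k : ℤ[X]) = (X - C 1) * s + f * u :=
      mul_left_cancel₀ (pow_ne_zero _ hXne) heq
    have h4 := congrArg (Polynomial.eval 1) hcancel
    simp [hf1] at h4
    exact ⟨u.eval 1, h4⟩
  -- now build the linear equivalence
  set K := RingHom.ker ε with hKdef
  set N := Submodule.restrictScalars ℤ (K ^ m) with hN
  set N' := Submodule.comap N.subtype (Submodule.restrictScalars ℤ (K ^ (m + 1))) with hN'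
  have hYmem : y ^ m ∈ K ^ m := by
    rw [hKpow]; exact Ideal.mem_span_singleton_self _
  set Y : N := ⟨y ^ m, hYmem⟩ with hY
  set φ : ℤ →ₗ[ℤ] (N ⧸ N') := N'.mkQ.comp (LinearMap.toSpanSingleton ℤ N Y) with hφ
  have hφapp : ∀ k : ℤ, φ k = N'.mkQ (k • Y) := fun k => rfl
  have hsurj : Function.Surjective φ := by
    intro z
    obtain ⟨⟨z, hz⟩, rfl⟩ := N'.mkQ_surjective z
    have hz' : z ∈ Ideal.span {y ^ m} := by rw [← hKpow]; exact hz
    rw [Ideal.mem_span_singleton] at hz'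
    obtain ⟨c, hc⟩ := hz'
    obtain ⟨a, rfl⟩ := Ideal.Quotient.mk_surjective c
    rw [← hmkq] at hc
    refine ⟨a.eval 1, ?_⟩
    rw [hφapp, Submodule.mkQ_apply, Submodule.mkQ_apply, Submodule.Quotient.eq]
    rw [hN', Submodule.mem_comap, Submodule.restrictScalars_mem]
    have hval : ((a.eval 1 • Y - ⟨z, hz⟩ : N) : ℤ[X] ⧸ Ideal.span {(X : ℤ[X]) ^ p - 1})
        = (a.eval 1 : ℤ) • y ^ m - z := rfl
    rw [Submodule.subtype_apply, hval, hKpow, hc]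
    have heval : (a - C (a.eval 1)).eval 1 = 0 := by simp
    obtain ⟨b, hb⟩ := Polynomial.dvd_iff_isRoot.2 heval
    have hh : (a.eval 1 : ℤ) • y ^ m - y ^ m * mkq a = -(mkq b * y ^ (m + 1)) := by
      rw [zsmul_eq_mul, ← hCk, mul_comm (y ^ m) (mkq a), ← sub_mul, ← map_sub,
        show (C (a.eval 1) : ℤ[X]) - a = -((X - C 1) * b) by rw [← hb]; ring,
        map_neg, map_mul, ← hy, pow_succ']
      ring
    rw [hh]
    exact neg_mem (Ideal.mul_mem_left _ _ (Ideal.mem_span_singleton_self _))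
  have hkerφ : LinearMap.ker φ = Submodule.span ℤ {(p : ℤ)} := by
    ext k
    rw [LinearMap.mem_ker, hφapp, Submodule.mkQ_apply, Submodule.Quotient.mk_eq_zero,
      hN', Submodule.mem_comap, Submodule.restrictScalars_mem, Submodule.subtype_apply,
      show ((k • Y : N) : ℤ[X] ⧸ Ideal.span {(X : ℤ[X]) ^ p - 1}) = k • y ^ m from rfl,
      hKpow, Submodule.mem_span_singleton (M := ℤ)]
    constructor
    · intro h
      have h' : (k : ℤ[X] ⧸ Ideal.span {(X : ℤ[X]) ^ p - 1}) * y ^ m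
          ∈ Ideal.span {y ^ (m + 1)} := by rwa [← zsmul_eq_mul]
      obtain ⟨j, hj⟩ := hker k h'
      exact ⟨j, by rw [hj, smul_eq_mul]; ring⟩
    · rintro ⟨j, rfl⟩
      have hh : (j • (p : ℤ)) • y ^ m
          = j • (((p : ℤ) : ℤ[X] ⧸ Ideal.span {(X : ℤ[X]) ^ p - 1}) * y ^ m) := by
        simp only [smul_eq_mul, zsmul_eq_mul]
        push_cast
        ring
      rw [hh, zsmul_eq_mul]
      exact Ideal.mul_mem_left _ _ hpmem
  have e1 : (ℤ ⧸ LinearMap.ker φ) ≃ₗ[ℤ] (N ⧸ N') := φ.quotKerEquivOfSurjective hsurj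
  have e2 : (ℤ ⧸ LinearMap.ker φ) ≃ₗ[ℤ] ZMod p := by
    rw [hkerφ]
    exact (Int.quotientSpanNatEquivZMod p).toAddEquiv.toIntLinearEquiv
  exact ⟨e1.symm.trans e2⟩
end
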